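/- arXiv:2503.17571 — 3 statements merged into one kernel-verified Lean document; each statement's English description precedes it below -/
import Mathlib

section
/- For every positive integer L, the following identity of formal power series in q holds: the sum over n ≥ 0 of b₂(L,n)·qⁿ equals q²·(1 + q + q² + … + q^{L−2})·∏_{k=0}^{L−3}(1 + q^{2+k}). -/
/-!
Statement 1: For every positive integer `L`,
`∑_{n ≥ 0} b₂(L,n) qⁿ = q² (1 + q + ⋯ + q^{L−2}) ∏_{k=0}^{L−3}(1 + q^{2+k})`
as formal power series in `q` over `ℚ`, where `b₂(L,n)` is the total number of
cells of hook length 2 summed over all partitions of `n` into distinct parts with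
largest part at most `L`.
-/

/-- `λ'_j`: the number of parts of `π` that are at least `j` (the conjugate partition). -/
def conjPart (π : Multiset ℕ) (j : ℕ) : ℕ := (π.filter (fun p => j ≤ p)).card

/-- `λ_i`: the `i`-th largest part of `π` (1-indexed). -/
def rowPart (π : Multiset ℕ) (i : ℕ) : ℕ :=
  ((Finset.Icc 1 π.sum).filter (fun j => i ≤ conjPart π j)).card

/-- The number of cells of hook length `t` in the Young diagram of `π`:
cells `(i,j)` with `1 ≤ i`, `1 ≤ j ≤ λ_i` and `λ_i + λ'_j − i − j + 1 = t`. -/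
def hookCount (π : Multiset ℕ) (t : ℕ) : ℕ :=
  (((Finset.Icc 1 π.sum) ×ˢ (Finset.Icc 1 π.sum)).filter
    (fun c => c.2 ≤ rowPart π c.1 ∧ rowPart π c.1 + conjPart π c.2 + 1 = t + c.1 + c.2)).card

/-- `b₂(L,n)`: the total number of cells of hook length 2 summed over all partitions of `n`
into distinct parts whose largest part is at most `L`. -/
def b2L (L n : ℕ) : ℕ :=
  ∑ π ∈ (Nat.Partition.distincts n).filter (fun π => ∀ p ∈ π.parts, p ≤ L),
    hookCount π.parts 2



set_option maxHeartbeats 1000000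

section lemmas
variable {s : Multiset ℕ}

lemma mem_le_sum (hpos : ∀ p ∈ s, 0 < p) {p : ℕ} (hp : p ∈ s) : p ≤ s.sum :=
  Multiset.single_le_sum (fun x hx => Nat.zero_le x) p hp

lemma card_le_sum (hpos : ∀ p ∈ s, 0 < p) : Multiset.card s ≤ s.sum := by
  induction s using Multiset.induction with
  | empty => simp
  | cons a t ih =>
    simp only [Multiset.card_cons, Multiset.sum_cons]
    have ha : 0 < a := hpos a (Multiset.mem_cons_self a t)
    have := ih (fun p hp => hpos p (Multiset.mem_cons_of_mem hp))
    omega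

lemma conjPart_anti {j j' : ℕ} (h : j ≤ j') : conjPart s j' ≤ conjPart s j := by
  apply Multiset.card_le_card
  apply Multiset.monotone_filter_right
  intro p hp
  omega

lemma conjPart_one (hpos : ∀ p ∈ s, 0 < p) : conjPart s 1 = Multiset.card s := by
  show Multiset.card (Multiset.filter (fun p => 1 ≤ p) s) = Multiset.card s
  have h : Multiset.filter (fun p => 1 ≤ p) s = s :=
    Multiset.filter_eq_self.2 (fun p hp => hpos p hp)
  rw [h]

lemma conjPart_le_card (j : ℕ) : conjPart s j ≤ Multiset.card s :=
  Multiset.card_le_card (Multiset.filter_le _ _)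

lemma conjPart_eq_zero (hpos : ∀ p ∈ s, 0 < p) {j : ℕ} (h : s.sum < j) : conjPart s j = 0 := by
  unfold conjPart
  rw [Multiset.card_eq_zero, Multiset.filter_eq_nil]
  intro p hp
  have := mem_le_sum hpos hp
  omega

lemma conjPart_split (j : ℕ) : conjPart s j = conjPart s (j + 1) + s.count j := by
  unfold conjPart
  induction s using Multiset.induction with
  | empty => simp
  | cons a t ih =>
    rw [Multiset.filter_cons, Multiset.filter_cons, Multiset.count_cons,
      Multiset.card_add, Multiset.card_add, ih]
    by_cases h3 : j = a
    · subst h3; simp; omega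
    · by_cases h1 : j ≤ a <;> by_cases h2 : j + 1 ≤ a <;> simp [h1, h2, h3] <;> omega

lemma conjPart_pos_of_mem {p : ℕ} (hp : p ∈ s) : 1 ≤ conjPart s p := by
  unfold conjPart
  rw [Nat.succ_le_iff, Multiset.card_pos_iff_exists_mem]
  exact ⟨p, Multiset.mem_filter.2 ⟨hp, by simp⟩⟩

/-- initial segment lemma -/
lemma initseg (T : Finset ℕ) (h1 : ∀ j ∈ T, 1 ≤ j)
    (hd : ∀ j ∈ T, ∀ j', 1 ≤ j' → j' ≤ j → j' ∈ T) : T = Finset.Icc 1 T.card := by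
  rcases T.eq_empty_or_nonempty with h | h
  · simp [h]
  · have hm := T.max'_mem h
    have hT : T = Finset.Icc 1 (T.max' h) := by
      apply Finset.Subset.antisymm
      · intro j hj
        exact Finset.mem_Icc.2 ⟨h1 j hj, T.le_max' j hj⟩
      · intro j hj
        rw [Finset.mem_Icc] at hj
        exact hd _ hm j hj.1 hj.2
    rw [hT, Nat.card_Icc]
    norm_num

/-- the Galois correspondence -/
lemma galois (hpos : ∀ p ∈ s, 0 < p) {i j : ℕ} (hi : 1 ≤ i) (hj : 1 ≤ j) :
    j ≤ rowPart s i ↔ i ≤ conjPart s j := by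
  set T := (Finset.Icc 1 s.sum).filter (fun j => i ≤ conjPart s j) with hT
  have hTseg : T = Finset.Icc 1 T.card := by
    apply initseg
    · intro x hx
      rw [hT, Finset.mem_filter, Finset.mem_Icc] at hx
      exact hx.1.1
    · intro x hx x' h1 h2
      rw [hT, Finset.mem_filter, Finset.mem_Icc] at hx ⊢
      exact ⟨⟨h1, le_trans h2 hx.1.2⟩, le_trans hx.2 (conjPart_anti h2)⟩
  have hrow : rowPart s i = T.card := rfl
  constructor
  · intro h
    have : j ∈ T := by
      rw [hTseg]
      exact Finset.mem_Icc.2 ⟨hj, by rwa [hrow] at h⟩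
    rw [hT, Finset.mem_filter] at this
    exact this.2
  · intro h
    have hjc : 1 ≤ conjPart s j := le_trans hi h
    have hjn : j ≤ s.sum := by
      rw [show (1 ≤ conjPart s j) ↔ 0 < Multiset.card (s.filter (fun p => j ≤ p)) from Iff.rfl,
      Multiset.card_pos_iff_exists_mem] at hjc
      obtain ⟨p, hp⟩ := hjc
      rw [Multiset.mem_filter] at hp
      exact le_trans hp.2 (mem_le_sum hpos hp.1)
    have : j ∈ T := by
      rw [hT, Finset.mem_filter, Finset.mem_Icc]
      exact ⟨⟨hj, hjn⟩, h⟩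
    rw [hTseg, Finset.mem_Icc] at this
    rw [hrow]
    exact this.2
end lemmas

section derived
variable {s : Multiset ℕ}

lemma count_le_one (hnd : s.Nodup) (p : ℕ) : s.count p ≤ 1 :=
  Multiset.nodup_iff_count_le_one.1 hnd p

lemma rowPart_ge_one (hpos : ∀ p ∈ s, 0 < p) {i : ℕ} (hi1 : 1 ≤ i)
    (hic : i ≤ Multiset.card s) : 1 ≤ rowPart s i :=
  (galois hpos hi1 le_rfl).2 (by rw [conjPart_one hpos]; exact hic)

lemma conjPart_rowPart (hpos : ∀ p ∈ s, 0 < p) (hnd : s.Nodup) {i : ℕ} (hi1 : 1 ≤ i)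
    (hic : i ≤ Multiset.card s) : conjPart s (rowPart s i) = i := by
  have hr1 : 1 ≤ rowPart s i := rowPart_ge_one hpos hi1 hic
  have hge : i ≤ conjPart s (rowPart s i) := (galois hpos hi1 hr1).1 le_rfl
  have hlt : conjPart s (rowPart s i + 1) < i := by
    by_contra h
    push_neg at h
    have := (galois hpos hi1 (by omega)).2 h
    omega
  have hsplit := conjPart_split (s := s) (rowPart s i)
  have hcnt := count_le_one hnd (rowPart s i)
  omega

lemma rowPart_mem (hpos : ∀ p ∈ s, 0 < p) (hnd : s.Nodup) {i : ℕ} (hi1 : 1 ≤ i)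
    (hic : i ≤ Multiset.card s) : rowPart s i ∈ s := by
  have hr1 : 1 ≤ rowPart s i := rowPart_ge_one hpos hi1 hic
  have hge : i ≤ conjPart s (rowPart s i) := (galois hpos hi1 hr1).1 le_rfl
  have hlt : conjPart s (rowPart s i + 1) < i := by
    by_contra h
    push_neg at h
    have := (galois hpos hi1 (by omega)).2 h
    omega
  have hsplit := conjPart_split (s := s) (rowPart s i)
  rw [← Multiset.count_pos]
  omega

lemma rowPart_conjPart (hpos : ∀ p ∈ s, 0 < p) {p : ℕ} (hp : p ∈ s) :
    rowPart s (conjPart s p) = p := by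
  have hi1 : 1 ≤ conjPart s p := conjPart_pos_of_mem hp
  have hp1 : 1 ≤ p := hpos p hp
  have h1 : p ≤ rowPart s (conjPart s p) := (galois hpos hi1 hp1).2 le_rfl
  have h2 : rowPart s (conjPart s p) ≤ p := by
    by_contra h
    push_neg at h
    have h3 := (galois hpos hi1 (by omega : 1 ≤ p + 1)).1 h
    have hsplit := conjPart_split (s := s) p
    have hcp : 0 < s.count p := Multiset.count_pos.2 hp
    omega
  omega

theorem hookCount_two (hpos : ∀ p ∈ s, 0 < p) (hnd : s.Nodup) :
    hookCount s 2 = (s.toFinset.filter (fun p => 2 ≤ p ∧ (p - 1) ∉ s)).card := by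
  unfold hookCount
  refine (Finset.card_bij (fun p _ => ((conjPart s p, p - 1) : ℕ × ℕ)) ?_ ?_ ?_).symm
  · -- maps into
    intro p hp
    rw [Finset.mem_filter, Multiset.mem_toFinset] at hp
    have hps := hp.1
    have h2p := hp.2.1
    have hnm := hp.2.2
    have hpn : p ≤ s.sum := mem_le_sum hpos hps
    have hc1 : 1 ≤ conjPart s p := conjPart_pos_of_mem hps
    have hcn : conjPart s p ≤ s.sum := le_trans (conjPart_le_card p) (card_le_sum hpos)
    have hrow : rowPart s (conjPart s p) = p := rowPart_conjPart hpos hps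
    have hsplit := conjPart_split (s := s) (p - 1)
    have hpm1 : p - 1 + 1 = p := by omega
    rw [hpm1] at hsplit
    have hcnt : s.count (p - 1) = 0 := Multiset.count_eq_zero.2 hnm
    show ((conjPart s p, p - 1) : ℕ × ℕ) ∈ _
    rw [Finset.mem_filter, Finset.mem_product, Finset.mem_Icc, Finset.mem_Icc]
    refine ⟨⟨⟨hc1, hcn⟩, ⟨by omega, by omega⟩⟩, ?_, ?_⟩
    · simpa [hrow] using (by omega : p - 1 ≤ p)
    · simp only [hrow]
      omega
  · -- injective
    intro p hp p' hp' h
    rw [Finset.mem_filter] at hp hp'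
    have := congrArg Prod.snd h
    simp only at this
    have h2p := hp.2.1
    have h2p' := hp'.2.1
    omega
  · -- surjective
    rintro ⟨i, j⟩ hc
    rw [Finset.mem_filter, Finset.mem_product, Finset.mem_Icc, Finset.mem_Icc] at hc
    obtain ⟨⟨⟨hi1, hin⟩, hj1, hjn⟩, hle, heq⟩ := hc
    simp only at hle heq hi1 hin hj1 hjn
    have hr1 : 1 ≤ rowPart s i := le_trans hj1 hle
    have hicard : i ≤ Multiset.card s := by
      have := (galois hpos hi1 le_rfl).1 hr1
      rwa [conjPart_one hpos] at this
    have hcr : conjPart s (rowPart s i) = i := conjPart_rowPart hpos hnd hi1 hicard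
    have hLj : i ≤ conjPart s j := (galois hpos hi1 hj1).1 hle
    have hcase : (rowPart s i = j ∧ conjPart s j = i + 1) ∨
        (rowPart s i = j + 1 ∧ conjPart s j = i) := by omega
    rcases hcase with ⟨h1, h2⟩ | ⟨h1, h2⟩
    · rw [h1] at hcr
      omega
    · have hpmem : rowPart s i ∈ s := rowPart_mem hpos hnd hi1 hicard
      refine ⟨rowPart s i, ?_, ?_⟩
      · rw [Finset.mem_filter, Multiset.mem_toFinset]
        refine ⟨hpmem, by omega, ?_⟩
        have hsplit := conjPart_split (s := s) (rowPart s i - 1)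
        have : rowPart s i - 1 + 1 = rowPart s i := by omega
        rw [this] at hsplit
        have hj' : rowPart s i - 1 = j := by omega
        rw [hj'] at hsplit
        have hcnt : s.count j = 0 := by omega
        rw [hj']
        exact Multiset.count_eq_zero.mp hcnt
      · have hj' : rowPart s i - 1 = j := by omega
        rw [Prod.ext_iff]
        exact ⟨hcr, hj'⟩
end derived

section partitions
open Nat Finset

lemma mem_distincts' {n : ℕ} (π : Nat.Partition n) :
    π ∈ Nat.Partition.distincts n ↔ π.parts.Nodup := by
  simp [Nat.Partition.distincts]

/-- the count of hook-2 cells, as a function of the parts multiset -/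
def cfun' (t : Multiset ℕ) : ℕ := (t.toFinset.filter (fun p => 2 ≤ p ∧ (p - 1) ∉ t)).card

/-- generic weighted sum over strict partitions with parts at most `L` -/
def W (f : Multiset ℕ → ℕ) (L n : ℕ) : ℕ :=
  ∑ π ∈ (Nat.Partition.distincts n).filter (fun π => ∀ p ∈ π.parts, p ≤ L), f π.parts

lemma b2L_eq_W (L n : ℕ) : b2L L n = W cfun' L n := by
  unfold b2L W
  apply Finset.sum_congr rfl
  intro π hπ
  rw [Finset.mem_filter] at hπ
  exact hookCount_two (fun p hp => π.parts_pos hp) ((mem_distincts' π).1 hπ.1)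

/-- the key bijection: strict partitions of `m + v` with parts `≤ v` containing `v`
correspond to strict partitions of `m` with parts `≤ v - 1`. -/
lemma sum_contains (v m : ℕ) (hv : 0 < v) (f : Multiset ℕ → ℕ) :
    ∑ π ∈ (Nat.Partition.distincts (m + v)).filter
        (fun π => (∀ p ∈ π.parts, p ≤ v) ∧ v ∈ π.parts), f π.parts
    = ∑ σ ∈ (Nat.Partition.distincts m).filter (fun σ => ∀ p ∈ σ.parts, p ≤ v - 1),
        f (v ::ₘ σ.parts) := by
  refine Finset.sum_bij'
    (i := fun π hπ =>
      (⟨π.parts.erase v, fun {p} hp => π.parts_pos (Multiset.mem_of_mem_erase hp), by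
        have hmem : v ∈ π.parts := (Finset.mem_filter.1 hπ).2.2
        have h1 : (v ::ₘ π.parts.erase v).sum = m + v := by
          rw [Multiset.cons_erase hmem, π.parts_sum]
        rw [Multiset.sum_cons] at h1
        omega⟩ : Nat.Partition m))
    (j := fun σ hσ =>
      (⟨v ::ₘ σ.parts, fun {p} hp => by
        rcases Multiset.mem_cons.1 hp with rfl | hp'
        · exact hv
        · exact σ.parts_pos hp', by
        rw [Multiset.sum_cons, σ.parts_sum]; omega⟩ : Nat.Partition (m + v)))
    ?_ ?_ ?_ ?_ ?_
  · -- hi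
    intro π hπ
    rw [Finset.mem_filter] at hπ ⊢
    have hd := hπ.1
    have hle := hπ.2.1
    have hmem := hπ.2.2
    have hnd : π.parts.Nodup := (mem_distincts' π).1 hd
    constructor
    · rw [mem_distincts']
      exact hnd.erase v
    · intro p hp
      have hne : p ≠ v := (hnd.mem_erase_iff.1 hp).1
      have hpp : p ∈ π.parts := Multiset.mem_of_mem_erase hp
      have := hle p hpp
      omega
  · -- hj
    intro σ hσ
    rw [Finset.mem_filter] at hσ ⊢
    obtain ⟨hd, hle⟩ := hσ
    have hnd : σ.parts.Nodup := (mem_distincts' σ).1 hd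
    have hvn : v ∉ σ.parts := fun h => by have := hle v h; omega
    refine ⟨?_, ?_, ?_⟩
    · rw [mem_distincts']
      exact Multiset.nodup_cons.2 ⟨hvn, hnd⟩
    · intro p hp
      rcases Multiset.mem_cons.1 hp with rfl | hp'
      · exact le_rfl
      · have := hle p hp'; omega
    · exact Multiset.mem_cons_self v _
  · -- left_inv
    intro π hπ
    have hmem : v ∈ π.parts := (Finset.mem_filter.1 hπ).2.2
    exact Nat.Partition.ext (Multiset.cons_erase hmem)
  · -- right_inv
    intro σ hσ
    exact Nat.Partition.ext (Multiset.erase_cons_head v σ.parts)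
  · -- values
    intro π hπ
    have hmem : v ∈ π.parts := (Finset.mem_filter.1 hπ).2.2
    exact congrArg f (Multiset.cons_erase hmem).symm

lemma W_rec (f : Multiset ℕ → ℕ) (M n : ℕ) :
    W f (M + 1) n = W f M n +
      (if M + 1 ≤ n then
        ∑ σ ∈ (Nat.Partition.distincts (n - (M + 1))).filter
          (fun σ => ∀ p ∈ σ.parts, p ≤ M), f ((M + 1) ::ₘ σ.parts)
      else 0) := by
  unfold W
  rw [← Finset.sum_filter_add_sum_filter_not
    ((Nat.Partition.distincts n).filter (fun π => ∀ p ∈ π.parts, p ≤ M + 1))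
    (fun π => (M + 1) ∈ π.parts)]
  have h1 : ((Nat.Partition.distincts n).filter (fun π => ∀ p ∈ π.parts, p ≤ M + 1)).filter
      (fun π => (M + 1) ∉ π.parts)
      = (Nat.Partition.distincts n).filter (fun π => ∀ p ∈ π.parts, p ≤ M) := by
    rw [Finset.filter_filter]
    apply Finset.filter_congr
    intro π _
    constructor
    · rintro ⟨hle, hnm⟩ p hp
      have := hle p hp
      have : p ≠ M + 1 := fun h => hnm (h ▸ hp)
      omega
    · intro hle
      exact ⟨fun p hp => by have := hle p hp; omega, fun h => by have := hle _ h; omega⟩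
  have h2 : ((Nat.Partition.distincts n).filter (fun π => ∀ p ∈ π.parts, p ≤ M + 1)).filter
      (fun π => (M + 1) ∈ π.parts)
      = (Nat.Partition.distincts n).filter
        (fun π => (∀ p ∈ π.parts, p ≤ M + 1) ∧ (M + 1) ∈ π.parts) := by
    rw [Finset.filter_filter]
  rw [h1, h2]
  rw [add_comm]
  congr 1
  by_cases hn : M + 1 ≤ n
  · rw [if_pos hn]
    have hm : n - (M + 1) + (M + 1) = n := by omega
    calc ∑ π ∈ (Nat.Partition.distincts n).filter
          (fun π => (∀ p ∈ π.parts, p ≤ M + 1) ∧ (M + 1) ∈ π.parts), f π.parts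
        = ∑ σ ∈ (Nat.Partition.distincts (n - (M + 1))).filter
            (fun σ => ∀ p ∈ σ.parts, p ≤ (M + 1) - 1), f ((M + 1) ::ₘ σ.parts) := by
          conv_lhs => rw [← hm]
          exact sum_contains (M + 1) (n - (M + 1)) (by omega) f
      _ = ∑ σ ∈ (Nat.Partition.distincts (n - (M + 1))).filter
            (fun σ => ∀ p ∈ σ.parts, p ≤ M), f ((M + 1) ::ₘ σ.parts) := by
          simp only [Nat.add_sub_cancel]
  · rw [if_neg hn]
    have : (Nat.Partition.distincts n).filter
        (fun π => (∀ p ∈ π.parts, p ≤ M + 1) ∧ (M + 1) ∈ π.parts) = ∅ := by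
      rw [Finset.filter_eq_empty_iff]
      rintro π _ ⟨_, hmem⟩
      have h1 : M + 1 ≤ π.parts.sum :=
        Multiset.single_le_sum (fun x _ => Nat.zero_le x) _ hmem
      rw [π.parts_sum] at h1
      omega
    rw [this, Finset.sum_empty]
end partitions

section recs
open Nat Finset

/-- number of strict partitions of `n` with all parts at most `M` -/
def aL (M n : ℕ) : ℕ :=
  ((Nat.Partition.distincts n).filter (fun π => ∀ p ∈ π.parts, p ≤ M)).card

lemma aL_eq_W (M n : ℕ) : aL M n = W (fun _ => 1) M n := by
  unfold aL W
  rw [Finset.card_eq_sum_ones]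

lemma cfun'_cons {v : ℕ} (hv : 2 ≤ v) {t : Multiset ℕ} (ht : ∀ p ∈ t, p ≤ v - 1) :
    cfun' (v ::ₘ t) = cfun' t + (if (v - 1) ∈ t then 0 else 1) := by
  unfold cfun'
  have hvt : v ∉ t := fun h => by have := ht v h; omega
  rw [Multiset.toFinset_cons]
  have hcong : t.toFinset.filter (fun p => 2 ≤ p ∧ (p - 1) ∉ (v ::ₘ t))
      = t.toFinset.filter (fun p => 2 ≤ p ∧ (p - 1) ∉ t) := by
    apply Finset.filter_congr
    intro p hp
    rw [Multiset.mem_toFinset] at hp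
    have hple := ht p hp
    have hne : p - 1 ≠ v := by omega
    simp only [Multiset.mem_cons, not_or]
    constructor
    · rintro ⟨h2, _, h3⟩; exact ⟨h2, h3⟩
    · rintro ⟨h2, h3⟩; exact ⟨h2, hne, h3⟩
  rw [Finset.filter_insert]
  have hpredv : (2 ≤ v ∧ (v - 1) ∉ (v ::ₘ t)) ↔ (v - 1) ∉ t := by
    simp only [Multiset.mem_cons, not_or]
    constructor
    · rintro ⟨_, _, h⟩; exact h
    · intro h; exact ⟨hv, by omega, h⟩
  by_cases hmem : (v - 1) ∈ t
  · rw [if_neg (by rw [hpredv]; exact fun h => h hmem), hcong, if_pos hmem]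
    omega
  · rw [if_pos (hpredv.2 hmem), hcong, if_neg hmem]
    rw [Finset.card_insert_of_notMem]
    intro h
    rw [Finset.mem_filter, Multiset.mem_toFinset] at h
    exact hvt h.1

lemma aL_rec (M n : ℕ) :
    aL (M + 1) n = aL M n + (if M + 1 ≤ n then aL M (n - (M + 1)) else 0) := by
  rw [aL_eq_W, W_rec, ← aL_eq_W]
  congr 1
  split_ifs with h
  · rw [aL_eq_W]; rfl
  · rfl

lemma b2L_one (n : ℕ) : b2L 1 n = 0 := by
  rw [b2L_eq_W]
  unfold W
  apply Finset.sum_eq_zero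
  intro π hπ
  rw [Finset.mem_filter] at hπ
  unfold cfun'
  rw [Finset.card_eq_zero, Finset.filter_eq_empty_iff]
  intro p hp
  rw [Multiset.mem_toFinset] at hp
  have := hπ.2 p hp
  rintro ⟨h2, _⟩
  omega

lemma b2L_rec (L n : ℕ) (hL : 1 ≤ L) :
    b2L (L + 1) n = b2L L n +
      (if L + 1 ≤ n then b2L L (n - (L + 1)) + aL (L - 1) (n - (L + 1)) else 0) := by
  rw [b2L_eq_W, W_rec, ← b2L_eq_W]
  congr 1
  split_ifs with h
  · have hstep : ∀ σ ∈ (Nat.Partition.distincts (n - (L + 1))).filter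
        (fun σ => ∀ p ∈ σ.parts, p ≤ L),
        cfun' ((L + 1) ::ₘ σ.parts) = cfun' σ.parts + (if L ∈ σ.parts then 0 else 1) := by
      intro σ hσ
      rw [Finset.mem_filter] at hσ
      have := cfun'_cons (v := L + 1) (by omega) (t := σ.parts)
        (fun p hp => by have := hσ.2 p hp; omega)
      simpa using this
    rw [Finset.sum_congr rfl hstep, Finset.sum_add_distrib]
    congr 1
    · rw [b2L_eq_W]; rfl
    · -- ∑ (if L ∈ σ.parts then 0 else 1) = aL (L-1) (n - (L+1))
      have hset : ((Nat.Partition.distincts (n - (L + 1))).filter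
            (fun σ => ∀ p ∈ σ.parts, p ≤ L)).filter (fun σ => L ∉ σ.parts)
          = (Nat.Partition.distincts (n - (L + 1))).filter
            (fun σ => ∀ p ∈ σ.parts, p ≤ L - 1) := by
        rw [Finset.filter_filter]
        apply Finset.filter_congr
        intro σ _
        constructor
        · rintro ⟨hle, hnm⟩ p hp
          have h1 := hle p hp
          have h2 : p ≠ L := fun hq => hnm (hq ▸ hp)
          omega
        · intro hle
          exact ⟨fun p hp => by have := hle p hp; omega,
            fun hq => by have := hle _ hq; omega⟩
      have hsw : ∀ σ : Nat.Partition (n - (L + 1)),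
          (if L ∈ σ.parts then 0 else 1) = (if L ∉ σ.parts then (1 : ℕ) else 0) := by
        intro σ
        by_cases hq : L ∈ σ.parts <;> simp [hq]
      rw [Finset.sum_congr rfl (fun σ _ => hsw σ), ← Finset.sum_filter, hset]
      unfold aL
      rw [Finset.card_eq_sum_ones]
  · rfl
end recs

section series
open Finset PowerSeries

lemma aL_zero (n : ℕ) : aL 0 n = if n = 0 then 1 else 0 := by
  split_ifs with hn
  · subst hn
    unfold aL
    rw [Finset.card_eq_one]
    refine ⟨default, ?_⟩
    rw [Finset.eq_singleton_iff_unique_mem]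
    constructor
    · rw [Finset.mem_filter, mem_distincts']
      simp
    · intro π _
      exact Unique.eq_default π
  · unfold aL
    rw [Finset.card_eq_zero, Finset.filter_eq_empty_iff]
    intro π _ hle
    have hparts : π.parts = 0 := Multiset.eq_zero_of_forall_notMem
      (fun p hp => by have h1 := π.parts_pos hp; have h2 := hle p hp; omega)
    have := π.parts_sum
    rw [hparts] at this
    simp at this
    omega

lemma mk_add (f g : ℕ → ℚ) :
    PowerSeries.mk (fun n => f n + g n) = PowerSeries.mk f + PowerSeries.mk g := by
  ext n
  simp

lemma mk_shift (k : ℕ) (f : ℕ → ℚ) :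
    PowerSeries.mk (fun n => if k ≤ n then f (n - k) else 0)
      = (PowerSeries.X : ℚ⟦X⟧) ^ k * PowerSeries.mk f := by
  ext n
  rw [PowerSeries.coeff_mk, PowerSeries.coeff_X_pow_mul']
  split_ifs <;> simp [PowerSeries.coeff_mk]

lemma psA (M : ℕ) :
    PowerSeries.mk (fun n => (aL M n : ℚ))
      = ∏ j ∈ Finset.range M, (1 + (PowerSeries.X : ℚ⟦X⟧) ^ (j + 1)) := by
  induction M with
  | zero =>
    rw [Finset.range_zero, Finset.prod_empty]
    ext n
    rw [PowerSeries.coeff_mk, aL_zero, PowerSeries.coeff_one]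
    split_ifs <;> simp
  | succ M ih =>
    have h : (fun n => (aL (M + 1) n : ℚ))
        = fun n => (aL M n : ℚ) + (if M + 1 ≤ n then (aL M (n - (M + 1)) : ℚ) else 0) := by
      funext n
      rw [aL_rec]
      push_cast
      rfl
    rw [h, mk_add, mk_shift (M + 1) (fun m => (aL M m : ℚ)), ih, Finset.prod_range_succ]
    ring

lemma alg (L : ℕ) (hL : 1 ≤ L) :
    ((PowerSeries.X : ℚ⟦X⟧) ^ 2 * (∑ k ∈ Finset.range (L + 1 - 1), (PowerSeries.X : ℚ⟦X⟧) ^ k) *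
        ∏ k ∈ Finset.range (L + 1 - 2), (1 + (PowerSeries.X : ℚ⟦X⟧) ^ (2 + k)))
      = (1 + (PowerSeries.X : ℚ⟦X⟧) ^ (L + 1)) *
          ((PowerSeries.X : ℚ⟦X⟧) ^ 2 * (∑ k ∈ Finset.range (L - 1), (PowerSeries.X : ℚ⟦X⟧) ^ k) *
            ∏ k ∈ Finset.range (L - 2), (1 + (PowerSeries.X : ℚ⟦X⟧) ^ (2 + k)))
        + (PowerSeries.X : ℚ⟦X⟧) ^ (L + 1) *
            ∏ j ∈ Finset.range (L - 1), (1 + (PowerSeries.X : ℚ⟦X⟧) ^ (j + 1)) := by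
  obtain ⟨N, rfl⟩ | rfl : (∃ N, L = N + 2) ∨ L = 1 := by
    rcases L with _ | _ | N
    · omega
    · right; rfl
    · left; exact ⟨N, rfl⟩
  · -- L = N + 2
    have e1 : N + 2 + 1 - 1 = N + 2 := by omega
    have e2 : N + 2 + 1 - 2 = N + 1 := by omega
    have e3 : N + 2 - 1 = N + 1 := by omega
    have e4 : N + 2 - 2 = N := by omega
    rw [e1, e2, e3, e4]
    have hQ : ∏ j ∈ Finset.range (N + 1), (1 + (PowerSeries.X : ℚ⟦X⟧) ^ (j + 1))
        = (∏ k ∈ Finset.range N, (1 + (PowerSeries.X : ℚ⟦X⟧) ^ (2 + k))) *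
          (1 + (PowerSeries.X : ℚ⟦X⟧)) := by
      rw [Finset.prod_range_succ']
      congr 1
      · apply Finset.prod_congr rfl
        intro k _
        congr 2
        omega
      · norm_num
    rw [hQ, Finset.prod_range_succ]
    have hX1 : (PowerSeries.X : ℚ⟦X⟧) - 1 ≠ 0 := by
      intro h
      have := congrArg (PowerSeries.constantCoeff (R := ℚ)) h
      simp at this
    apply mul_right_cancel₀ hX1
    have hg1 := geom_sum_mul (PowerSeries.X : ℚ⟦X⟧) (N + 2)
    have hg2 := geom_sum_mul (PowerSeries.X : ℚ⟦X⟧) (N + 1)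
    set P := ∏ k ∈ Finset.range N, (1 + (PowerSeries.X : ℚ⟦X⟧) ^ (2 + k))
    linear_combination ((PowerSeries.X : ℚ⟦X⟧) ^ 2 * P * (1 + (PowerSeries.X : ℚ⟦X⟧) ^ (2 + N))) * hg1
      - ((1 + (PowerSeries.X : ℚ⟦X⟧) ^ (N + 3)) * (PowerSeries.X : ℚ⟦X⟧) ^ 2 * P) * hg2
  · -- L = 1
    norm_num

lemma psB (L : ℕ) (hL : 1 ≤ L) :
    PowerSeries.mk (fun n => (b2L L n : ℚ))
      = (PowerSeries.X : ℚ⟦X⟧) ^ 2 * (∑ k ∈ Finset.range (L - 1), (PowerSeries.X : ℚ⟦X⟧) ^ k) *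
        ∏ k ∈ Finset.range (L - 2), (1 + (PowerSeries.X : ℚ⟦X⟧) ^ (2 + k)) := by
  induction L, hL using Nat.le_induction with
  | base =>
    norm_num
    ext n
    rw [PowerSeries.coeff_mk, b2L_one]
    simp
  | succ L hL ih =>
    have h : (fun n => (b2L (L + 1) n : ℚ))
        = fun n => (b2L L n : ℚ) +
            (if L + 1 ≤ n then ((b2L L (n - (L + 1)) : ℚ) + (aL (L - 1) (n - (L + 1)) : ℚ)) else 0) := by
      funext n
      rw [b2L_rec L n hL]
      push_cast
      rfl
    have hsplit : PowerSeries.mk (fun m => ((b2L L m : ℚ) + (aL (L - 1) m : ℚ)))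
        = PowerSeries.mk (fun m => (b2L L m : ℚ)) + PowerSeries.mk (fun m => (aL (L - 1) m : ℚ)) :=
      mk_add _ _
    rw [h, mk_add, mk_shift (L + 1) (fun m => (b2L L m : ℚ) + (aL (L - 1) m : ℚ)), hsplit,
      ih, psA, alg L hL]
    ring
end series

open PowerSeries in
theorem b2L_gen_fun (L : ℕ) (hL : 0 < L) :
    PowerSeries.mk (fun n => (b2L L n : ℚ)) =
      (X : ℚ⟦X⟧) ^ 2 * (∑ k ∈ Finset.range (L - 1), (X : ℚ⟦X⟧) ^ k) *
        ∏ k ∈ Finset.range (L - 2), (1 + (X : ℚ⟦X⟧) ^ (2 + k)) := by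
  exact psB L hL
end

section
/- For every integer L ≥ 4, the following identity of formal power series in q holds: ∑_{n,m ≥ 0} C(m,2)·b₂(L,m,n)·qⁿ = q⁶·[L−2 choose 2]_q · ∏_{k=0}^{L−5}(1 + q^{3+k}), where C(m,2) is the binomial coefficient m choose 2. -/
/-- `b₂(L,m,n)`: the number of partitions of `n` into distinct parts with largest part at
most `L` having exactly `m` cells of hook length 2. -/
def b2Lmn (L m n : ℕ) : ℕ :=
  ((Nat.Partition.distincts n).filter
    (fun π => (∀ p ∈ π.parts, p ≤ L) ∧ hookCount π.parts 2 = m)).card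

/-- `(q; q)_N = ∏_{k=0}^{N−1} (1 − q^{k+1})`, as a power series in `q` over `ℚ`. -/
noncomputable def qPoch (N : ℕ) : PowerSeries ℚ :=
  ∏ k ∈ Finset.range N, (1 - (PowerSeries.X : PowerSeries ℚ) ^ (k + 1))

/-- The Gaussian binomial coefficient `[a choose b]_q`, defined as
`(q;q)_a / ((q;q)_b (q;q)_{a−b})` for `a ≥ b ≥ 0` and `0` otherwise. -/
noncomputable def gauss (a b : ℕ) : PowerSeries ℚ :=
  if b ≤ a then qPoch a * (qPoch b * qPoch (a - b))⁻¹ else 0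


set_option maxHeartbeats 1000000

namespace Hook2


lemma conjPart_anti (π : Multiset ℕ) {j j' : ℕ} (h : j ≤ j') : conjPart π j' ≤ conjPart π j :=
  Multiset.card_le_card (Multiset.monotone_filter_right π (fun _ hp => h.trans hp))

lemma conjPart_succ_add (π : Multiset ℕ) (j : ℕ) :
    conjPart π j = conjPart π (j + 1) + π.count j := by
  unfold conjPart
  rw [Multiset.count_eq_card_filter_eq, ← Multiset.card_add, Multiset.filter_add_filter]
  have h1 : (Multiset.filter (fun a => j + 1 ≤ a ∨ j = a) π) = Multiset.filter (fun p => j ≤ p) π := by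
    apply Multiset.filter_congr; intro x _; constructor <;> omega
  have h2 : (Multiset.filter (fun a => j + 1 ≤ a ∧ j = a) π) = 0 := by
    rw [Multiset.filter_eq_nil]; intro x _; omega
  rw [h1, h2]; simp

lemma part_le_sum {π : Multiset ℕ} {p : ℕ} (hp : p ∈ π) : p ≤ π.sum :=
  Multiset.single_le_sum (fun _ _ => Nat.zero_le _) _ hp

lemma card_le_sum {π : Multiset ℕ} (hpos : ∀ p ∈ π, 1 ≤ p) : π.card ≤ π.sum := by
  induction π using Multiset.induction_on with
  | empty => simp
  | cons a s ih =>
    simp only [Multiset.card_cons, Multiset.sum_cons]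
    have := hpos a (Multiset.mem_cons_self a s)
    have := ih (fun p hp => hpos p (Multiset.mem_cons_of_mem hp))
    omega

lemma conjPart_le_sum (π : Multiset ℕ) (hpos : ∀ p ∈ π, 1 ≤ p) (j : ℕ) :
    conjPart π j ≤ π.sum :=
  le_trans (Multiset.card_le_card (Multiset.filter_le _ _)) (card_le_sum hpos)

lemma exists_part_of_conjPart_pos {π : Multiset ℕ} {j : ℕ} (h : 1 ≤ conjPart π j) :
    ∃ p ∈ π, j ≤ p := by
  obtain ⟨p, hp⟩ := Multiset.card_pos_iff_exists_mem.1 h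
  rw [Multiset.mem_filter] at hp
  exact ⟨p, hp.1, hp.2⟩

lemma icc_of_downclosed (T : Finset ℕ) (h1 : ∀ a ∈ T, 1 ≤ a)
    (h2 : ∀ a ∈ T, ∀ b, 1 ≤ b → b ≤ a → b ∈ T) : T = Finset.Icc 1 T.card := by
  rcases T.eq_empty_or_nonempty with h | h
  · simp [h]
  have hmax := T.max'_mem h
  have hT : T = Finset.Icc 1 (T.max' h) := by
    apply Finset.ext; intro b
    simp only [Finset.mem_Icc]
    constructor
    · intro hb; exact ⟨h1 b hb, Finset.le_max' T b hb⟩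
    · intro hb; exact h2 _ hmax b hb.1 hb.2
  have hcard : T.card = T.max' h := by
    conv_lhs => rw [hT]
    rw [Nat.card_Icc]; omega
  rw [← hcard] at hT
  exact hT

lemma le_rowPart_iff {π : Multiset ℕ} (hpos : ∀ p ∈ π, 1 ≤ p) {i j : ℕ}
    (hi : 1 ≤ i) (hj : 1 ≤ j) : j ≤ rowPart π i ↔ i ≤ conjPart π j := by
  set T := (Finset.Icc 1 π.sum).filter (fun j => i ≤ conjPart π j) with hTdef
  have hT : T = Finset.Icc 1 T.card := by
    apply icc_of_downclosed
    · intro a ha; rw [hTdef, Finset.mem_filter, Finset.mem_Icc] at ha; exact ha.1.1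
    · intro a ha b hb1 hba
      rw [hTdef, Finset.mem_filter, Finset.mem_Icc] at ha ⊢
      exact ⟨⟨hb1, hba.trans ha.1.2⟩, le_trans ha.2 (conjPart_anti π hba)⟩
  have hrow : rowPart π i = T.card := rfl
  rw [hrow]
  constructor
  · intro hle
    have : j ∈ T := by rw [hT, Finset.mem_Icc]; exact ⟨hj, hle⟩
    rw [hTdef, Finset.mem_filter] at this; exact this.2
  · intro hle
    have hjn : j ≤ π.sum := by
      obtain ⟨p, hp, hjp⟩ := exists_part_of_conjPart_pos (le_trans hi hle)
      exact hjp.trans (part_le_sum hp)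
    have : j ∈ T := by
      rw [hTdef, Finset.mem_filter, Finset.mem_Icc]; exact ⟨⟨hj, hjn⟩, hle⟩
    rw [hT, Finset.mem_Icc] at this; exact this.2

lemma count_le_one {π : Multiset ℕ} (h : π.Nodup) (a : ℕ) : π.count a ≤ 1 :=
  Multiset.nodup_iff_count_le_one.1 h a

theorem hook2_eq (π : Multiset ℕ) (hpos : ∀ p ∈ π, 1 ≤ p) (hnod : π.Nodup) :
    hookCount π 2 = (π.filter (fun p => 2 ≤ p ∧ p - 1 ∉ π)).card := by
  classical
  have hG : (π.filter (fun p => 2 ≤ p ∧ p - 1 ∉ π)).card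
      = (π.toFinset.filter (fun p => 2 ≤ p ∧ p - 1 ∉ π)).card := by
    rw [Finset.card, Finset.filter_val, Multiset.toFinset_val, Multiset.dedup_eq_self.2 hnod]
  rw [hG]
  unfold hookCount
  -- the key case analysis for members of the hook set
  have key : ∀ i j : ℕ, (i, j) ∈ (((Finset.Icc 1 π.sum) ×ˢ (Finset.Icc 1 π.sum)).filter
      (fun c => c.2 ≤ rowPart π c.1 ∧ rowPart π c.1 + conjPart π c.2 + 1 = 2 + c.1 + c.2)) →
      rowPart π i = j + 1 ∧ conjPart π j = i ∧ conjPart π (j+1) = i ∧ 1 ≤ i ∧ 1 ≤ j := by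
    intro i j hmem
    simp only [Finset.mem_filter, Finset.mem_product, Finset.mem_Icc] at hmem
    obtain ⟨⟨⟨hi1, hin⟩, hj1, hjn⟩, hle, heq⟩ := hmem
    have hconj : i ≤ conjPart π j := (le_rowPart_iff hpos hi1 hj1).1 hle
    have hcase : (rowPart π i = j + 1 ∧ conjPart π j = i) ∨
        (rowPart π i = j ∧ conjPart π j = i + 1) := by omega
    rcases hcase with ⟨hr, hc⟩ | ⟨hr, hc⟩
    · have hconj1 : conjPart π (j+1) = i := by
        have h1 : i ≤ conjPart π (j+1) := (le_rowPart_iff hpos hi1 (by omega)).1 (by omega)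
        have h2 : conjPart π (j+1) ≤ conjPart π j := conjPart_anti π (by omega)
        omega
      exact ⟨hr, hc, hconj1, hi1, hj1⟩
    · exfalso
      have hconj1 : ¬ (j + 1 ≤ rowPart π i) := by omega
      rw [le_rowPart_iff hpos hi1 (by omega)] at hconj1
      have hcnt := conjPart_succ_add π j
      have := count_le_one hnod j
      omega

  apply Finset.card_nbij' (i := fun c => c.2 + 1)
    (j := fun p => (conjPart π (p-1), p - 1))
  · intro a ha
    beta_reduce
    obtain ⟨hr, hc, hc1, hi1, hj1⟩ := key a.1 a.2 ha
    rw [Finset.mem_coe, Finset.mem_filter, Multiset.mem_toFinset]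
    have hcnt2 := conjPart_succ_add π (a.2 + 1)
    rw [show a.2 + 1 + 1 = a.2 + 2 from rfl] at hcnt2
    have hconj2 : conjPart π (a.2 + 2) < a.1 := by
      by_contra hcon
      push_neg at hcon
      have := (le_rowPart_iff hpos hi1 (by omega)).2 hcon
      omega
    have hmemp : a.2 + 1 ∈ π := by
      rw [← Multiset.count_pos]; omega
    have hnmem : a.2 ∉ π := by
      have hcnt := conjPart_succ_add π a.2
      rw [← Multiset.count_eq_zero]; omega
    refine ⟨hmemp, by omega, ?_⟩
    simpa using hnmem
  · intro p hp
    beta_reduce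
    rw [Finset.mem_coe, Finset.mem_filter, Multiset.mem_toFinset] at hp
    obtain ⟨hmem, hp2, hnmem⟩ := hp
    have hcnt0 : π.count (p-1) = 0 := Multiset.count_eq_zero.2 hnmem
    have hcnt1 : 1 ≤ π.count p := Multiset.count_pos.2 hmem
    have e1 : conjPart π (p-1) = conjPart π p := by
      have := conjPart_succ_add π (p-1)
      have hp1 : p - 1 + 1 = p := by omega
      rw [hp1] at this; omega
    have e2 : conjPart π (p+1) + 1 ≤ conjPart π p := by
      have := conjPart_succ_add π p; omega
    have hi1 : 1 ≤ conjPart π p := by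
      have : p ∈ π.filter (fun q => p ≤ q) := Multiset.mem_filter.2 ⟨hmem, le_refl p⟩
      have := Multiset.card_pos_iff_exists_mem.2 ⟨p, this⟩
      exact this
    have hplesum : p ≤ π.sum := part_le_sum hmem
    have hrow : rowPart π (conjPart π p) = p := by
      have hub : ¬ (p + 1 ≤ rowPart π (conjPart π p)) := by
        rw [le_rowPart_iff hpos hi1 (by omega)]
        omega
      have hlb : p ≤ rowPart π (conjPart π p) :=
        (le_rowPart_iff hpos hi1 (by omega)).2 (le_refl _)
      omega
    rw [Finset.mem_coe, Finset.mem_filter, Finset.mem_product, Finset.mem_Icc, Finset.mem_Icc]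
    rw [e1]
    have hcle : conjPart π p ≤ π.sum := conjPart_le_sum π hpos p
    refine ⟨⟨⟨by omega, by omega⟩, by omega, by omega⟩, ?_, ?_⟩
    · simp only []
      rw [le_rowPart_iff hpos (by omega) (by omega)]
      have : conjPart π (p-1) = conjPart π p := e1
      omega
    · simp only []
      rw [hrow]
      omega
  · intro a ha
    obtain ⟨hr, hc, hc1, hi1, hj1⟩ := key a.1 a.2 ha
    have : a.2 + 1 - 1 = a.2 := by omega
    beta_reduce
    rw [this, hc]
  · intro p hp
    rw [Finset.mem_coe, Finset.mem_filter, Multiset.mem_toFinset] at hp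
    simp only []
    omega



lemma part_le_sum' {π : Multiset ℕ} {p : ℕ} (hp : p ∈ π) : p ≤ π.sum := part_le_sum hp

open PowerSeries

/-- the statistic: number of cells of hook length 2, in gap form -/
def mstat (π : Multiset ℕ) : ℕ := (π.filter (fun p => 2 ≤ p ∧ p - 1 ∉ π)).card

/-- partitions of n into distinct parts all at most L -/
def Sfin (L n : ℕ) : Finset (Nat.Partition n) :=
  (Nat.Partition.distincts n).filter (fun π => ∀ p ∈ π.parts, p ≤ L)

noncomputable def wsum (f : ℕ → ℚ) (L : ℕ) : PowerSeries ℚ :=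
  PowerSeries.mk fun n => ∑ π ∈ Sfin L n, f (mstat π.parts)

lemma mem_Sfin {L n : ℕ} {π : Nat.Partition n} :
    π ∈ Sfin L n ↔ π.parts.Nodup ∧ ∀ p ∈ π.parts, p ≤ L := by
  rw [Sfin, Finset.mem_filter, Nat.Partition.distincts, Finset.mem_filter]
  simp [Finset.mem_univ]

lemma hook_le (n : ℕ) (π : Nat.Partition n) : hookCount π.parts 2 ≤ n * n := by
  have h1 : hookCount π.parts 2 ≤ ((Finset.Icc 1 π.parts.sum) ×ˢ (Finset.Icc 1 π.parts.sum)).card :=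
    Finset.card_filter_le _ _
  rwa [Finset.card_product, Nat.card_Icc, π.parts_sum, Nat.add_sub_cancel] at h1

/-- Step A : the LHS of the theorem equals `wsum (choose 2)` -/
lemma lhs_eq (L : ℕ) :
    PowerSeries.mk (fun n => ∑' m : ℕ, (m.choose 2 : ℚ) * b2Lmn L m n) =
      wsum (fun m => (m.choose 2 : ℚ)) L := by
  ext n
  rw [coeff_mk, wsum, coeff_mk]
  have hzero : ∀ m ∉ Finset.range (n * n + 1), (m.choose 2 : ℚ) * b2Lmn L m n = 0 := by
    intro m hm
    rw [Finset.mem_range] at hm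
    have : b2Lmn L m n = 0 := by
      rw [b2Lmn, Finset.card_eq_zero, Finset.filter_eq_empty_iff]
      intro π _
      intro hcon
      have := hook_le n π
      omega
    rw [this]; simp
  rw [tsum_eq_sum hzero]
  have hb2 : ∀ m, (b2Lmn L m n : ℚ) =
      (((Sfin L n).filter (fun π => hookCount π.parts 2 = m)).card : ℚ) := by
    intro m
    rw [b2Lmn, Sfin, Finset.filter_filter]
  have step : ∀ m ∈ Finset.range (n * n + 1),
      (m.choose 2 : ℚ) * b2Lmn L m n =
      ∑ π ∈ (Sfin L n).filter (fun π => hookCount π.parts 2 = m),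
        ((hookCount π.parts 2).choose 2 : ℚ) := by
    intro m _
    rw [hb2]
    have : ∑ π ∈ (Sfin L n).filter (fun π => hookCount π.parts 2 = m),
        ((hookCount π.parts 2).choose 2 : ℚ)
        = ∑ _π ∈ (Sfin L n).filter (fun π => hookCount π.parts 2 = m), (m.choose 2 : ℚ) := by
      apply Finset.sum_congr rfl
      intro π hπ
      rw [Finset.mem_filter] at hπ
      rw [hπ.2]
    rw [this, Finset.sum_const, nsmul_eq_mul, mul_comm]
  rw [Finset.sum_congr rfl step]
  rw [Finset.sum_fiberwise_of_maps_to (fun π _ => Finset.mem_range.2 (by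
    have := hook_le n π; omega))]
  apply Finset.sum_congr rfl
  intro π hπ
  rw [mem_Sfin] at hπ
  rw [hook2_eq π.parts (fun p hp => π.parts_pos hp) hπ.1]
  rfl

lemma mstat_cons (L : ℕ) (hL : 1 ≤ L) (s : Multiset ℕ) (hle : ∀ p ∈ s, p ≤ L) :
    mstat ((L+1) ::ₘ s) = mstat s + if L ∈ s then 0 else 1 := by
  unfold mstat
  rw [Multiset.filter_cons]
  have hfil : Multiset.filter (fun p => 2 ≤ p ∧ p - 1 ∉ (L+1) ::ₘ s) s
      = Multiset.filter (fun p => 2 ≤ p ∧ p - 1 ∉ s) s := by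
    apply Multiset.filter_congr
    intro p hp
    have hpL := hle p hp
    constructor
    · rintro ⟨h2, hn⟩
      exact ⟨h2, fun hmem => hn (Multiset.mem_cons_of_mem hmem)⟩
    · rintro ⟨h2, hn⟩
      refine ⟨h2, fun hmem => ?_⟩
      rcases Multiset.mem_cons.1 hmem with h | h
      · omega
      · exact hn h
  rw [hfil, Multiset.card_add]
  by_cases hLs : L ∈ s
  · have : ¬ (2 ≤ L + 1 ∧ (L + 1) - 1 ∉ (L+1) ::ₘ s) := by
      rintro ⟨-, hn⟩
      apply hn
      have : L + 1 - 1 = L := by omega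
      rw [this]
      exact Multiset.mem_cons_of_mem hLs
    rw [if_neg this, if_pos hLs]
    simp
  · have : (2 ≤ L + 1 ∧ (L + 1) - 1 ∉ (L+1) ::ₘ s) := by
      refine ⟨by omega, fun hmem => ?_⟩
      have : L + 1 - 1 = L := by omega
      rw [this] at hmem
      rcases Multiset.mem_cons.1 hmem with h | h
      · omega
      · exact hLs h
    rw [if_pos this, if_neg hLs]
    simp [add_comm]

lemma Sfin_pred {L n : ℕ} (hL : 1 ≤ L) :
    (Sfin L n).filter (fun π => L ∉ π.parts) = Sfin (L-1) n := by
  apply Finset.ext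
  intro π
  rw [Finset.mem_filter, mem_Sfin, mem_Sfin]
  constructor
  · rintro ⟨⟨hnd, hle⟩, hnm⟩
    refine ⟨hnd, fun p hp => ?_⟩
    have := hle p hp
    have : p ≠ L := fun h => hnm (h ▸ hp)
    omega
  · rintro ⟨hnd, hle⟩
    refine ⟨⟨hnd, fun p hp => by have := hle p hp; omega⟩, fun hmem => ?_⟩
    have := hle L hmem
    omega


/-- remove a part equal to `L+1` -/
def eraseP (L n : ℕ) (π : Nat.Partition n) (hmem : (L+1) ∈ π.parts) :
    Nat.Partition (n - (L+1)) where
  parts := π.parts.erase (L+1)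
  parts_pos := fun hp => π.parts_pos (Multiset.mem_of_mem_erase hp)
  parts_sum := by
    have h := Multiset.cons_erase hmem
    have hs := π.parts_sum
    have h2 : ((L+1) ::ₘ π.parts.erase (L+1)).sum = n := by rw [h, hs]
    rw [Multiset.sum_cons] at h2
    omega

/-- add a part equal to `L+1` -/
def consP (L n : ℕ) (hn : L + 1 ≤ n) (π : Nat.Partition (n - (L+1))) : Nat.Partition n where
  parts := (L+1) ::ₘ π.parts
  parts_pos := fun hp => by
    rcases Multiset.mem_cons.1 hp with h | h
    · omega
    · exact π.parts_pos h
  parts_sum := by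
    rw [Multiset.sum_cons, π.parts_sum]
    omega

lemma eraseP_mem {L n : ℕ} {π : Nat.Partition n} (hπ : π ∈ Sfin (L+1) n)
    (hmem : (L+1) ∈ π.parts) : eraseP L n π hmem ∈ Sfin L (n - (L+1)) := by
  rw [mem_Sfin] at hπ ⊢
  obtain ⟨hnd, hle⟩ := hπ
  constructor
  · exact hnd.erase _
  · intro p hp
    have hne : p ≠ L + 1 := ((hnd.mem_erase_iff).1 hp).1
    have := hle p (Multiset.mem_of_mem_erase hp)
    omega

lemma consP_mem {L n : ℕ} (hn : L + 1 ≤ n) {π' : Nat.Partition (n - (L+1))}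
    (hπ' : π' ∈ Sfin L (n - (L+1))) :
    consP L n hn π' ∈ (Sfin (L+1) n).filter (fun π => (L+1) ∈ π.parts) := by
  rw [mem_Sfin] at hπ'
  obtain ⟨hnd, hle⟩ := hπ'
  rw [Finset.mem_filter, mem_Sfin]
  have hnotmem : (L+1) ∉ π'.parts := fun h => by have := hle _ h; omega
  refine ⟨⟨Multiset.Nodup.cons hnotmem hnd, fun p hp => ?_⟩, Multiset.mem_cons_self _ _⟩
  rcases Multiset.mem_cons.1 hp with h | h
  · omega
  · have := hle p h; omega

/-- The master recursion. -/
lemma master (f : ℕ → ℚ) (L : ℕ) (hL : 1 ≤ L) :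
    wsum f (L+1) = wsum f L +
      X^(L+1) * (wsum f L - wsum f (L-1) + wsum (fun m => f (m+1)) (L-1)) := by
  ext n
  rw [map_add, coeff_X_pow_mul', map_add, map_sub]
  simp only [wsum, coeff_mk]
  -- split the LHS sum according to whether L+1 is a part
  rw [← Finset.sum_filter_add_sum_filter_not (Sfin (L+1) n) (fun π => (L+1) ∈ π.parts)]
  have hnotin : (Sfin (L+1) n).filter (fun π => (L+1) ∉ π.parts) = Sfin L n := by
    apply Finset.ext
    intro π
    rw [Finset.mem_filter, mem_Sfin, mem_Sfin]
    constructor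
    · rintro ⟨⟨hnd, hle⟩, hnm⟩
      refine ⟨hnd, fun p hp => ?_⟩
      have := hle p hp
      have : p ≠ L + 1 := fun h => hnm (h ▸ hp)
      omega
    · rintro ⟨hnd, hle⟩
      refine ⟨⟨hnd, fun p hp => by have := hle p hp; omega⟩, fun hmem => ?_⟩
      have := hle (L+1) hmem
      omega
  rw [hnotin]
  by_cases hn : L + 1 ≤ n
  · rw [if_pos hn]
    -- bijection between partitions containing L+1 and partitions of n-(L+1) with parts ≤ L
    have hbij : ∑ π ∈ (Sfin (L+1) n).filter (fun π => (L+1) ∈ π.parts), f (mstat π.parts)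
        = ∑ π' ∈ Sfin L (n - (L+1)), f (mstat π'.parts + if L ∈ π'.parts then 0 else 1) := by
      refine Finset.sum_bij'
        (fun π hπ => eraseP L n π (Finset.mem_filter.1 hπ).2)
        (fun π' _ => consP L n hn π') ?_ ?_ ?_ ?_ ?_
      · intro π hπ
        exact eraseP_mem (Finset.mem_filter.1 hπ).1 (Finset.mem_filter.1 hπ).2
      · intro π' hπ'
        exact consP_mem hn hπ'
      · intro π hπ
        apply Nat.Partition.ext
        show (L+1) ::ₘ π.parts.erase (L+1) = π.parts
        exact Multiset.cons_erase (Finset.mem_filter.1 hπ).2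
      · intro π' hπ'
        apply Nat.Partition.ext
        show ((L+1) ::ₘ π'.parts).erase (L+1) = π'.parts
        exact Multiset.erase_cons_head _ _
      · intro π hπ
        rw [Finset.mem_filter, mem_Sfin] at hπ
        obtain ⟨⟨hnd, hle⟩, hmem⟩ := hπ
        have hle' : ∀ p ∈ π.parts.erase (L+1), p ≤ L := by
          intro p hp
          have hne : p ≠ L + 1 := ((hnd.mem_erase_iff).1 hp).1
          have := hle p (Multiset.mem_of_mem_erase hp)
          omega
        have hms := mstat_cons L hL (π.parts.erase (L+1)) hle'
        show f (mstat π.parts) = f (mstat (π.parts.erase (L+1)) +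
          if L ∈ π.parts.erase (L+1) then 0 else 1)
        rw [← hms]
        congr 1
        congr 1
        exact (Multiset.cons_erase hmem).symm
    rw [hbij]
    -- now split the RHS sum according to whether L is a part
    rw [← Finset.sum_filter_add_sum_filter_not (Sfin L (n - (L+1))) (fun π => L ∈ π.parts)]
    rw [Sfin_pred hL]
    have e1 : ∑ π ∈ (Sfin L (n - (L+1))).filter (fun π => L ∈ π.parts),
        f (mstat π.parts + if L ∈ π.parts then 0 else 1)
        = ∑ π ∈ (Sfin L (n - (L+1))).filter (fun π => L ∈ π.parts), f (mstat π.parts) := by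
      apply Finset.sum_congr rfl
      intro π hπ
      rw [Finset.mem_filter] at hπ
      rw [if_pos hπ.2, add_zero]
    have e2 : ∑ π ∈ Sfin (L-1) (n - (L+1)),
        f (mstat π.parts + if L ∈ π.parts then 0 else 1)
        = ∑ π ∈ Sfin (L-1) (n - (L+1)), f (mstat π.parts + 1) := by
      apply Finset.sum_congr rfl
      intro π hπ
      rw [mem_Sfin] at hπ
      have : L ∉ π.parts := fun h => by have := hπ.2 L h; omega
      rw [if_neg this]
    rw [e1, e2]
    -- finally, the filtered sum equals the difference of full sums
    have e3 : ∑ π ∈ (Sfin L (n - (L+1))).filter (fun π => L ∈ π.parts), f (mstat π.parts)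
        = (∑ π ∈ Sfin L (n - (L+1)), f (mstat π.parts))
          - ∑ π ∈ Sfin (L-1) (n - (L+1)), f (mstat π.parts) := by
      rw [← Finset.sum_filter_add_sum_filter_not (Sfin L (n - (L+1))) (fun π => L ∈ π.parts)
        (fun π => f (mstat π.parts)), Sfin_pred hL]
      ring
    rw [e3]
    ring
  · rw [if_neg hn]
    have : (Sfin (L+1) n).filter (fun π => (L+1) ∈ π.parts) = ∅ := by
      rw [Finset.filter_eq_empty_iff]
      intro π _
      intro hcon
      have h1 : L + 1 ≤ π.parts.sum := part_le_sum' hcon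
      rw [π.parts_sum] at h1
      omega
    rw [this]
    simp



open PowerSeries

/-! ### generating function abbreviations -/

noncomputable def Phi (s t : ℕ) : PowerSeries ℚ :=
  ∏ k ∈ Finset.range t, (1 + (X : ℚ⟦X⟧)^(s+k))

noncomputable def Sg (t : ℕ) : PowerSeries ℚ := ∑ i ∈ Finset.range t, (X : ℚ⟦X⟧)^i

noncomputable def Aser (L : ℕ) : PowerSeries ℚ := wsum (fun m => (m.choose 2 : ℚ)) L
noncomputable def Bser (L : ℕ) : PowerSeries ℚ := wsum (fun m => (m : ℚ)) L
noncomputable def Cser (L : ℕ) : PowerSeries ℚ := wsum (fun _ => (1 : ℚ)) L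

lemma wsum_congr (f g : ℕ → ℚ) (h : ∀ m, f m = g m) (L : ℕ) : wsum f L = wsum g L := by
  have : f = g := funext h
  rw [this]

lemma wsum_add (f g : ℕ → ℚ) (L : ℕ) :
    wsum (fun m => f m + g m) L = wsum f L + wsum g L := by
  ext n
  rw [map_add]
  simp only [wsum, coeff_mk]
  rw [← Finset.sum_add_distrib]

/-! ### recursions -/

lemma CserRec (L : ℕ) (hL : 1 ≤ L) : Cser (L+1) = Cser L + X^(L+1) * Cser L := by
  unfold Cser
  have h := master (fun _ => (1:ℚ)) L hL
  rw [h]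
  ring

lemma BserRec (L : ℕ) (hL : 1 ≤ L) :
    Bser (L+1) = Bser L + X^(L+1) * (Bser L + Cser (L-1)) := by
  unfold Bser Cser
  have h := master (fun m => (m:ℚ)) L hL
  beta_reduce at h
  have h2 : wsum (fun m => ((m+1 : ℕ) : ℚ)) (L-1)
      = wsum (fun m => (m:ℚ)) (L-1) + wsum (fun _ => (1:ℚ)) (L-1) := by
    rw [← wsum_add]
    apply wsum_congr
    intro m
    push_cast
    ring
  rw [h, h2]
  ring

lemma AserRec (L : ℕ) (hL : 1 ≤ L) :
    Aser (L+1) = Aser L + X^(L+1) * (Aser L + Bser (L-1)) := by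
  unfold Aser Bser
  have h := master (fun m => (m.choose 2 : ℚ)) L hL
  beta_reduce at h
  have h2 : wsum (fun m => ((m+1).choose 2 : ℚ)) (L-1)
      = wsum (fun m => (m.choose 2 : ℚ)) (L-1) + wsum (fun m => (m:ℚ)) (L-1) := by
    rw [← wsum_add]
    apply wsum_congr
    intro m
    have he : (m+1).choose 2 = m.choose 2 + m := by
      simp [Nat.choose_succ_succ, Nat.choose_one_right]
      omega
    rw [he]
    push_cast
    ring
  rw [h, h2]
  ring

/-! ### small values -/

lemma mstat_zero_of_le_one {π : Multiset ℕ} (hle : ∀ p ∈ π, p ≤ 1) : mstat π = 0 := by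
  rw [mstat, Multiset.card_eq_zero, Multiset.filter_eq_nil]
  intro p hp
  have := hle p hp
  omega

lemma wsum_zero (f : ℕ → ℚ) (hf : f 0 = 0) (L : ℕ) (hL : L ≤ 1) : wsum f L = 0 := by
  ext n
  rw [wsum, coeff_mk, map_zero]
  apply Finset.sum_eq_zero
  intro π hπ
  rw [mem_Sfin] at hπ
  rw [mstat_zero_of_le_one (fun p hp => le_trans (hπ.2 p hp) hL), hf]

lemma Aser_one : Aser 1 = 0 := wsum_zero _ (by simp) 1 le_rfl
lemma Bser_one : Bser 1 = 0 := wsum_zero _ (by simp) 1 le_rfl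
lemma Bser_zero : Bser 0 = 0 := wsum_zero _ (by simp) 0 (by omega)

lemma Sfin_univ_zero (L : ℕ) : Sfin L 0 = Finset.univ := by
  apply Finset.ext
  intro π
  simp only [Finset.mem_univ, iff_true]
  rw [mem_Sfin, Nat.Partition.partition_zero_parts]
  constructor
  · exact Multiset.nodup_zero
  · intro p hp
    exact absurd hp (Multiset.notMem_zero p)

lemma Sfin_zero_pos (n : ℕ) (hn : n ≠ 0) : Sfin 0 n = ∅ := by
  rw [Finset.eq_empty_iff_forall_notMem]
  intro π hπ
  rw [mem_Sfin] at hπ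
  have hparts : π.parts = 0 := by
    apply Multiset.eq_zero_of_forall_notMem
    intro p hp
    have h1 := π.parts_pos hp
    have h2 := hπ.2 p hp
    omega
  have := π.parts_sum
  rw [hparts] at this
  simp at this
  omega

lemma Cser_zero : Cser 0 = 1 := by
  ext n
  rw [Cser, wsum, coeff_mk, coeff_one]
  rcases Nat.eq_zero_or_pos n with h | h
  · subst h
    rw [if_pos rfl, Sfin_univ_zero]
    rw [Finset.sum_const, Finset.card_univ]
    simp [Fintype.card_unique]
  · rw [if_neg (by omega), Sfin_zero_pos n (by omega)]
    simp

lemma parts_replicate {n : ℕ} (π : Nat.Partition n) (hle : ∀ p ∈ π.parts, p ≤ 1) :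
    π.parts = Multiset.replicate n 1 := by
  have hall : ∀ p ∈ π.parts, p = 1 := by
    intro p hp
    have := π.parts_pos hp
    have := hle p hp
    omega
  have h1 : π.parts = Multiset.replicate π.parts.card 1 :=
    Multiset.eq_replicate_card.2 hall
  have h2 : π.parts.card = n := by
    have := π.parts_sum
    rw [h1] at this
    simpa using this
  rw [h1, h2]

lemma Cser_one : Cser 1 = 1 + X := by
  ext n
  rw [Cser, wsum, coeff_mk, map_add, coeff_one, coeff_X]
  match n with
  | 0 =>
    rw [Sfin_univ_zero]
    rw [Finset.sum_const, Finset.card_univ]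
    simp [Fintype.card_unique]
  | 1 =>
    have : Sfin 1 1 = Finset.univ := by
      apply Finset.ext
      intro π
      simp only [Finset.mem_univ, iff_true]
      rw [mem_Sfin, Nat.Partition.partition_one_parts]
      constructor
      · exact Multiset.nodup_singleton 1
      · intro p hp
        rw [Multiset.mem_singleton] at hp
        omega
    rw [this, Finset.sum_const, Finset.card_univ]
    simp [Fintype.card_unique]
  | (k+2) =>
    have : Sfin 1 (k+2) = ∅ := by
      rw [Finset.eq_empty_iff_forall_notMem]
      intro π hπ
      rw [mem_Sfin] at hπ
      have := parts_replicate π hπ.2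
      rw [this] at hπ
      have hcnt := Multiset.nodup_iff_count_le_one.1 hπ.1 1
      rw [Multiset.count_replicate_self] at hcnt
      omega
    rw [this]
    simp

/-! ### closed forms -/

lemma Phi_succ (s t : ℕ) : Phi s (t+1) = Phi s t * (1 + X^(s+t)) := Finset.prod_range_succ _ _

lemma Phi_succ' (s t : ℕ) : Phi s (t+1) = (1 + X^s) * Phi (s+1) t := by
  rw [Phi, Finset.prod_range_succ']
  have : ∀ k, (1 + (X:ℚ⟦X⟧)^(s+(k+1))) = 1 + X^((s+1)+k) := by
    intro k
    congr 2
    omega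
  rw [Finset.prod_congr rfl (fun k _ => this k)]
  rw [mul_comm, add_zero]
  rfl

lemma Sg_mul (t : ℕ) : Sg t * (1 - X) = 1 - (X:ℚ⟦X⟧)^t := by
  have h := geom_sum_mul (X : ℚ⟦X⟧) t
  rw [Sg]
  linear_combination -h

lemma lemC : ∀ L : ℕ, Cser L = Phi 1 L := by
  intro L
  induction L with
  | zero => rw [Cser_zero, Phi]; simp
  | succ L ih =>
    match L, ih with
    | 0, _ =>
      rw [Cser_one, Phi_succ, Phi]
      simp
    | (K+1), ih =>
      rw [CserRec (K+1) (by omega), ih, Phi_succ 1 (K+1)]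
      ring

lemma lemB : ∀ L : ℕ, Bser L = X^2 * Sg (L-1) * Phi 2 (L-2) := by
  intro L
  induction L with
  | zero => rw [Bser_zero, Sg]; simp
  | succ L ih =>
    match L, ih with
    | 0, _ =>
      rw [Bser_one, Sg]
      simp
    | 1, _ =>
      -- Bser 2 = X^2
      rw [BserRec 1 le_rfl, Bser_one, Cser_zero]
      show (0:ℚ⟦X⟧) + X^2 * (0 + 1) = X^2 * Sg 1 * Phi 2 0
      rw [Sg, Phi]
      simp
    | (K+2), ih =>
      rw [BserRec (K+2) (by omega), ih, lemC]
      show X^2 * Sg (K+1) * Phi 2 K + X^(K+3) * (X^2 * Sg (K+1) * Phi 2 K + Phi 1 (K+1))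
        = X^2 * Sg (K+2) * Phi 2 (K+1)
      have hΦ2 : Phi 2 (K+1) = Phi 2 K * (1 + X^(2+K)) := Phi_succ 2 K
      have hΦ1 : Phi 1 (K+1) = (1 + X) * Phi 2 K := by
        rw [Phi_succ' 1 K, pow_one]
      have hs1 := Sg_mul (K+1)
      have hs2 := Sg_mul (K+2)
      have hne : ((1:ℚ⟦X⟧) - X) ≠ 0 := by
        intro h
        have := congrArg constantCoeff h
        simp at this
      apply mul_right_cancel₀ hne
      rw [hΦ2, hΦ1]
      linear_combination (X^2 * Phi 2 K * (1 + X^(K+3))) * hs1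
        - (X^2 * Phi 2 K * (1 + X^(2+K))) * hs2

lemma constCoeff_qPoch (N : ℕ) : constantCoeff (qPoch N) = 1 := by
  rw [qPoch, map_prod]
  apply Finset.prod_eq_one
  intro k _
  rw [map_sub, map_one, map_pow, constantCoeff_X]
  simp

lemma qPoch_zero : qPoch 0 = 1 := by rw [qPoch]; simp

lemma qPoch_two : qPoch 2 = (1 - X) * (1 - X^2) := by
  rw [qPoch, Finset.prod_range_succ, Finset.prod_range_one, pow_one]

lemma gauss_mul (c : ℕ) :
    gauss (c+2) 2 * ((1 - X) * (1 - X^2)) = (1 - X^(c+1)) * (1 - (X:ℚ⟦X⟧)^(c+2)) := by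
  rw [gauss, if_pos (by omega), show c+2-2 = c from by omega]
  have hsplit : qPoch (c+2) = qPoch c * ((1 - X^(c+1)) * (1 - X^(c+2))) := by
    rw [qPoch, qPoch, Finset.prod_range_succ, Finset.prod_range_succ]
    ring
  have hunit : (qPoch 2 * qPoch c) * (qPoch 2 * qPoch c)⁻¹ = 1 := by
    apply PowerSeries.mul_inv_cancel
    rw [map_mul, constCoeff_qPoch, constCoeff_qPoch]
    norm_num
  rw [hsplit, ← qPoch_two]
  linear_combination ((1 - X^(c+1)) * (1 - (X:ℚ⟦X⟧)^(c+2))) * hunit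

lemma gauss_two_two : gauss 2 2 = 1 := by
  rw [gauss, if_pos le_rfl, show 2-2 = 0 from rfl, qPoch_zero, mul_one]
  apply PowerSeries.mul_inv_cancel
  rw [constCoeff_qPoch]
  norm_num

lemma Bser_two : Bser 2 = X^2 := by
  rw [lemB]
  show X^2 * Sg 1 * Phi 2 0 = X^2
  rw [Sg, Phi]
  simp

lemma Aser_four : Aser 4 = X^6 := by
  have h2 : Aser 2 = 0 := by
    rw [show (2:ℕ) = 1+1 from rfl, AserRec 1 le_rfl, Aser_one, Bser_zero]
    simp
  have h3 : Aser 3 = 0 := by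
    rw [show (3:ℕ) = 2+1 from rfl, AserRec 2 (by omega), h2, Bser_one]
    simp
  rw [show (4:ℕ) = 3+1 from rfl, AserRec 3 (by omega), h3, Bser_two]
  ring

lemma stepA (a : ℕ) :
    X^6 * gauss (a+3) 2 * Phi 3 (a+1)
      = X^6 * gauss (a+2) 2 * Phi 3 a
        + X^(a+5) * (X^6 * gauss (a+2) 2 * Phi 3 a + X^2 * Sg (a+2) * Phi 2 (a+1)) := by
  have hΦ3 : Phi 3 (a+1) = Phi 3 a * (1 + X^(3+a)) := Phi_succ 3 a
  have hΦ2 : Phi 2 (a+1) = (1 + X^2) * Phi 3 a := Phi_succ' 2 a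
  have hs := Sg_mul (a+2)
  have hg1 : gauss (a+3) 2 * ((1 - X) * (1 - X^2)) = (1 - X^(a+2)) * (1 - (X:ℚ⟦X⟧)^(a+3)) := by
    have h := gauss_mul (a+1)
    rw [show a+1+2 = a+3 from by omega, show a+1+1 = a+2 from by omega] at h
    exact h
  have hg0 := gauss_mul a
  have hne : ((1:ℚ⟦X⟧) - X) * ((1 - X) * (1 - X^2)) ≠ 0 := by
    intro h
    have := congrArg constantCoeff h
    simp at this
  apply mul_right_cancel₀ hne
  rw [hΦ3, hΦ2]
  linear_combination (X^6 * Phi 3 a * (1 + X^(3+a)) * (1 - X)) * hg1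
    - (X^6 * Phi 3 a * (1 - X) * (1 + X^(a+5))) * hg0
    - (X^(a+5) * X^2 * (1 + X^2) * Phi 3 a * (1 - X) * (1 - X^2)) * hs

lemma lemA : ∀ L : ℕ, 4 ≤ L → Aser L = X^6 * gauss (L-2) 2 * Phi 3 (L-4) := by
  intro L hL
  induction L, hL using Nat.le_induction with
  | base =>
    rw [Aser_four, gauss_two_two, Phi]
    simp
  | succ L hL ih =>
    rw [AserRec L (by omega), ih, lemB]
    obtain ⟨a, rfl⟩ : ∃ a, L = a + 4 := ⟨L - 4, by omega⟩
    rw [show a+4-2 = a+2 from by omega, show a+4-4 = a from by omega,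
      show a+4+1-2 = a+3 from by omega, show a+4+1-4 = a+1 from by omega,
      show a+4-1-1 = a+2 from by omega, show a+4-1-2 = a+1 from by omega,
      show a+4+1 = a+5 from by omega]
    exact (stepA a).symm


end Hook2

open PowerSeries in
theorem weighted_b2L_gen_fun (L : ℕ) (hL : 4 ≤ L) :
    PowerSeries.mk (fun n => ∑' m : ℕ, (m.choose 2 : ℚ) * b2Lmn L m n) =
      (X : ℚ⟦X⟧) ^ 6 * gauss (L - 2) 2 *
        ∏ k ∈ Finset.range (L - 4), (1 + (X : ℚ⟦X⟧) ^ (3 + k)) := by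
  rw [Hook2.lhs_eq]
  have h := Hook2.lemA L hL
  rw [Hook2.Aser] at h
  rw [h]
  rfl
end

section
/- Fix a positive integer L and a non-negative integer n. Let B_{L,n} be the set of pairs (π₁,π₂) of partitions with |π₁| + |π₂| = n, where π₁ is a partition into distinct parts all different from 1 with largest part at most L−1, and π₂ is a partition with at most one part, that part being at most L−2. Let A_{L,n} be the set of pairs (π₁,π₂) of partitions with |π₁| + |π₂| = n, where π₁ is a partition into odd parts with largest part at most 2L−1, and π₂ is a partition with at most one part, that part being odd and at most 2L−3. Then there exists an injection from B_{L,n} into A_{L,n}; in particular |B_{L,n}| ≤ |A_{L,n}|. -/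
/-!
Statement 11: Fix a positive integer `L` and `n ≥ 0`.  With `B_{L,n}` the set of pairs
`(π₁,π₂)` of partitions with `|π₁| + |π₂| = n`, where `π₁` has distinct parts, all
different from 1 and at most `L−1`, and `π₂` has at most one part, that part being at most
`L−2`; and `A_{L,n}` the set of pairs `(π₁,π₂)` with `|π₁| + |π₂| = n`, where `π₁` has odd
parts all at most `2L−1` and `π₂` has at most one part, that part being odd and at most
`2L−3`; there exists an injection from `B_{L,n}` into `A_{L,n}`, and in particular
`|B_{L,n}| ≤ |A_{L,n}|`.  Partitions are modelled as multisets of positive parts.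
-/

/-- The set `B_{L,n}`: pairs `(π₁,π₂)` of partitions (as multisets of positive integers)
with `|π₁| + |π₂| = n`, where `π₁` has distinct parts, all different from `1` and of size
at most `L−1`, and `π₂` has at most one part, of size at most `L−2`. -/
def setB (L n : ℕ) : Set (Multiset ℕ × Multiset ℕ) :=
  {p | p.1.sum + p.2.sum = n ∧
       p.1.Nodup ∧ (∀ x ∈ p.1, 0 < x ∧ x ≠ 1 ∧ x ≤ L - 1) ∧
       p.2.card ≤ 1 ∧ (∀ x ∈ p.2, 0 < x ∧ x ≤ L - 2)}

/-- The set `A_{L,n}`: pairs `(π₁,π₂)` of partitions (as multisets of positive integers)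
with `|π₁| + |π₂| = n`, where `π₁` has odd parts of size at most `2L−1`, and `π₂` has at
most one part, that part odd and of size at most `2L−3`. -/
def setA (L n : ℕ) : Set (Multiset ℕ × Multiset ℕ) :=
  {p | p.1.sum + p.2.sum = n ∧
       (∀ x ∈ p.1, Odd x ∧ x ≤ 2 * L - 1) ∧
       p.2.card ≤ 1 ∧ (∀ x ∈ p.2, Odd x ∧ x ≤ 2 * L - 3)}


open Multiset

/-- 2-adic valuation. -/
def v2 (k : ℕ) : ℕ := k.factorization 2

/-- odd part. -/
def oddP (k : ℕ) : ℕ := k / 2 ^ v2 k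

lemma oddP_mul (k : ℕ) : 2 ^ v2 k * oddP k = k :=
  Nat.ordProj_mul_ordCompl_eq_self k 2

lemma oddP_odd {k : ℕ} (hk : k ≠ 0) : Odd (oddP k) := by
  have h := Nat.not_dvd_ordCompl Nat.prime_two hk
  have h2 : k / 2 ^ k.factorization 2 % 2 ≠ 0 := fun hh => h (Nat.dvd_of_mod_eq_zero hh)
  rw [Nat.odd_iff]
  simpa [oddP, v2] using by omega

lemma oddP_le (k : ℕ) : oddP k ≤ k := Nat.div_le_self _ _

lemma oddP_v2_inj {a b : ℕ} (h1 : oddP a = oddP b) (h2 : v2 a = v2 b) : a = b := by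
  rw [← oddP_mul a, ← oddP_mul b, h1, h2]

def glaisher (π : Multiset ℕ) : Multiset ℕ :=
  π.bind fun k => replicate (2 ^ v2 k) (oddP k)

lemma glaisher_cons (a : ℕ) (s : Multiset ℕ) :
    glaisher (a ::ₘ s) = replicate (2 ^ v2 a) (oddP a) + glaisher s := by
  simp [glaisher]

lemma glaisher_sum (π : Multiset ℕ) : (glaisher π).sum = π.sum := by
  induction π using Multiset.induction with
  | empty => simp [glaisher]
  | cons a s ih =>
    rw [glaisher_cons, Multiset.sum_add, Multiset.sum_replicate, smul_eq_mul, oddP_mul,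
      ih, Multiset.sum_cons]

lemma mem_glaisher {x : ℕ} {π : Multiset ℕ} (hx : x ∈ glaisher π) :
    ∃ k ∈ π, x = oddP k := by
  simp only [glaisher, Multiset.mem_bind, Multiset.eq_of_mem_replicate] at hx
  obtain ⟨k, hk, hx⟩ := hx
  exact ⟨k, hk, Multiset.eq_of_mem_replicate hx⟩

lemma count_glaisher (m : ℕ) (π : Multiset ℕ) :
    count m (glaisher π)
      = ((π.filter (fun k => oddP k = m)).map (fun k => 2 ^ v2 k)).sum := by
  induction π using Multiset.induction with
  | empty => simp [glaisher]
  | cons a s ih =>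
    rw [glaisher_cons, Multiset.count_add, Multiset.count_replicate, ih]
    by_cases h : oddP a = m
    · rw [Multiset.filter_cons_of_pos _ (by simpa using h), Multiset.map_cons,
        Multiset.sum_cons, if_pos h]
    · rw [Multiset.filter_cons_of_neg _ (by simpa using h), if_neg h, zero_add]

lemma twoPow_sum_inj {s t : Multiset ℕ} (hs : s.Nodup) (ht : t.Nodup)
    (h : (s.map (fun i => 2 ^ i)).sum = (t.map (fun i => 2 ^ i)).sum) : s = t := by
  have key : ∀ u : Multiset ℕ, u.Nodup →
      (u.map (fun i => 2 ^ i)).sum.bitIndices = u.sort (· ≤ ·) := by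
    intro u hu
    have hnd : (u.sort (· ≤ ·)).Nodup := by
      rw [← Multiset.coe_nodup, Multiset.sort_eq]; exact hu
    have hsorted : (u.sort (· ≤ ·)).Pairwise (· < ·) :=
      ((Multiset.pairwise_sort u _).and hnd).imp (fun h => lt_of_le_of_ne h.1 h.2)
    have : (u.map (fun i => 2 ^ i)).sum
        = (((u.sort (· ≤ ·)) : List ℕ).map (fun i => 2 ^ i)).sum := by
      conv_lhs => rw [← Multiset.sort_eq u (· ≤ ·)]
      rw [Multiset.map_coe, Multiset.sum_coe]
    rw [this]
    exact Nat.bitIndices_twoPowsum hsorted.sortedLT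
  have : s.sort (· ≤ ·) = t.sort (· ≤ ·) := by rw [← key s hs, ← key t ht, h]
  rw [← Multiset.sort_eq s (· ≤ ·), ← Multiset.sort_eq t (· ≤ ·), this]

def expSet (m : ℕ) (π : Multiset ℕ) : Multiset ℕ :=
  (π.filter (fun k => oddP k = m)).map v2

lemma expSet_nodup {m : ℕ} {π : Multiset ℕ} (hπ : π.Nodup) : (expSet m π).Nodup := by
  refine (hπ.filter _).map_on ?_
  intro a ha b hb hab
  rw [Multiset.mem_filter] at ha hb
  exact oddP_v2_inj (ha.2.trans hb.2.symm) hab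

lemma count_glaisher' (m : ℕ) (π : Multiset ℕ) :
    count m (glaisher π) = ((expSet m π).map (fun a => 2 ^ a)).sum := by
  rw [count_glaisher, expSet, Multiset.map_map]
  rfl

lemma mem_expSet {k : ℕ} {π : Multiset ℕ} : k ∈ π ↔ v2 k ∈ expSet (oddP k) π := by
  constructor
  · intro hk
    exact Multiset.mem_map_of_mem _ (Multiset.mem_filter.2 ⟨hk, rfl⟩)
  · intro hk
    obtain ⟨k', hk', hv⟩ := Multiset.mem_map.1 hk
    rw [Multiset.mem_filter] at hk'
    exact (oddP_v2_inj hk'.2 hv) ▸ hk'.1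

lemma glaisher_inj {π σ : Multiset ℕ} (hπ : π.Nodup) (hσ : σ.Nodup)
    (h : glaisher π = glaisher σ) : π = σ := by
  have hE : ∀ m, expSet m π = expSet m σ := fun m =>
    twoPow_sum_inj (expSet_nodup hπ) (expSet_nodup hσ)
      (by rw [← count_glaisher', ← count_glaisher', h])
  rw [Multiset.Nodup.ext hπ hσ]
  intro a
  rw [@mem_expSet a π, @mem_expSet a σ, hE]

lemma even_count_one {π : Multiset ℕ} (h1 : (1 : ℕ) ∉ π) :
    2 ∣ count 1 (glaisher π) := by
  rw [count_glaisher]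
  refine Multiset.dvd_sum ?_
  intro x hx
  obtain ⟨k, hk, rfl⟩ := Multiset.mem_map.1 hx
  rw [Multiset.mem_filter] at hk
  have hv : v2 k ≠ 0 := by
    intro h0
    apply h1
    have hkk := oddP_mul k
    rw [h0, hk.2] at hkk
    have : k = 1 := by simpa using hkk.symm
    exact this ▸ hk.1
  exact dvd_pow_self 2 hv

def gOdd (j : ℕ) : ℕ := if j % 2 = 0 then j - 1 else j

def Fmap (p : Multiset ℕ × Multiset ℕ) : Multiset ℕ × Multiset ℕ :=
  (glaisher p.1 + replicate ((p.2.filter (fun x => x % 2 = 0)).card) 1,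
   p.2.map gOdd)

lemma sum_gOdd {π : Multiset ℕ} (h : ∀ x ∈ π, 0 < x) :
    (π.map gOdd).sum + (π.filter (fun x => x % 2 = 0)).card = π.sum := by
  induction π using Multiset.induction with
  | empty => simp
  | cons a s ih =>
    have ha : 0 < a := h a (Multiset.mem_cons_self a s)
    have ihs := ih (fun x hx => h x (Multiset.mem_cons_of_mem hx))
    rw [Multiset.map_cons, Multiset.sum_cons, Multiset.sum_cons]
    by_cases he : a % 2 = 0
    · rw [Multiset.filter_cons_of_pos _ (by simpa using he), Multiset.card_cons]
      have : gOdd a = a - 1 := if_pos he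
      omega
    · rw [Multiset.filter_cons_of_neg _ (by simpa using he)]
      have : gOdd a = a := if_neg he
      omega

lemma Fmap_mem {L n : ℕ} (hL : 0 < L) {p : Multiset ℕ × Multiset ℕ}
    (hp : p ∈ setB L n) : Fmap p ∈ setA L n := by
  obtain ⟨hsum, hnd, h1, hcard, h2⟩ := hp
  have hpos : ∀ x ∈ p.2, 0 < x := fun x hx => (h2 x hx).1
  simp only [Fmap, setA, Set.mem_setOf_eq]
  refine ⟨?_, ?_, ?_, ?_⟩
  · rw [Multiset.sum_add, glaisher_sum, Multiset.sum_replicate, smul_eq_mul, mul_one]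
    have := sum_gOdd hpos
    omega
  · intro x hx
    rcases Multiset.mem_add.1 hx with hx | hx
    · obtain ⟨k, hk, rfl⟩ := mem_glaisher hx
      obtain ⟨hk0, hk1, hkL⟩ := h1 k hk
      have := oddP_le k
      exact ⟨oddP_odd (by omega), by omega⟩
    · have : x = 1 := Multiset.eq_of_mem_replicate hx
      subst this
      exact ⟨odd_one, by omega⟩
  · show (p.2.map gOdd).card ≤ 1
    rw [Multiset.card_map]; exact hcard
  · intro x hx
    obtain ⟨j, hj, rfl⟩ := Multiset.mem_map.1 hx
    obtain ⟨hj0, hjL⟩ := h2 j hj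
    have hL3 : 3 ≤ L := by omega
    by_cases he : j % 2 = 0
    · have : gOdd j = j - 1 := if_pos he
      rw [this]
      exact ⟨Nat.odd_iff.2 (by omega), by omega⟩
    · have : gOdd j = j := if_neg he
      rw [this]
      exact ⟨Nat.odd_iff.2 (by omega), by omega⟩

lemma Fmap_injOn {L n : ℕ} : ∀ p ∈ setB L n, ∀ q ∈ setB L n,
    Fmap p = Fmap q → p = q := by
  intro p hp q hq h
  obtain ⟨hps, hpnd, hp1, hpc, hp2⟩ := hp
  obtain ⟨hqs, hqnd, hq1, hqc, hq2⟩ := hq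
  have h1 : glaisher p.1 + replicate ((p.2.filter (fun x => x % 2 = 0)).card) 1
      = glaisher q.1 + replicate ((q.2.filter (fun x => x % 2 = 0)).card) 1 :=
    congrArg Prod.fst h
  have h2 : p.2.map gOdd = q.2.map gOdd := congrArg Prod.snd h
  set cp := (p.2.filter (fun x => x % 2 = 0)).card with hcp_def
  set cq := (q.2.filter (fun x => x % 2 = 0)).card with hcq_def
  have hcp1 : cp ≤ 1 := (Multiset.card_le_card (Multiset.filter_le _ _)).trans hpc
  have hcq1 : cq ≤ 1 := (Multiset.card_le_card (Multiset.filter_le _ _)).trans hqc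
  have ep : 2 ∣ count 1 (glaisher p.1) :=
    even_count_one (fun hmem => ((hp1 1 hmem).2.1 rfl))
  have eq2 : 2 ∣ count 1 (glaisher q.1) :=
    even_count_one (fun hmem => ((hq1 1 hmem).2.1 rfl))
  have hcnt := congrArg (count 1) h1
  rw [Multiset.count_add, Multiset.count_add, Multiset.count_replicate,
    Multiset.count_replicate, if_pos rfl, if_pos rfl] at hcnt
  obtain ⟨a, ha⟩ := ep
  obtain ⟨b, hb⟩ := eq2
  have hceq : cp = cq := by omega
  rw [hceq] at h1
  have hg : glaisher p.1 = glaisher q.1 := by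
    exact add_right_cancel h1
  have hfst : p.1 = q.1 := glaisher_inj hpnd hqnd hg
  have hcard2 : p.2.card = q.2.card := by
    have := congrArg Multiset.card h2
    simpa using this
  have hsnd : p.2 = q.2 := by
    rcases Nat.le_one_iff_eq_zero_or_eq_one.1 hpc with h0 | hone
    · have hq0 : q.2.card = 0 := by omega
      rw [Multiset.card_eq_zero.1 h0, Multiset.card_eq_zero.1 hq0]
    · obtain ⟨j, hj⟩ := Multiset.card_eq_one.1 hone
      obtain ⟨j', hj'⟩ := Multiset.card_eq_one.1 (by omega : q.2.card = 1)
      rw [hj, hj'] at h2 ⊢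
      have hgj : gOdd j = gOdd j' := by simpa using h2
      have hjpos : 0 < j := (hp2 j (by rw [hj]; exact Multiset.mem_singleton_self j)).1
      have hj'pos : 0 < j' := (hq2 j' (by rw [hj']; exact Multiset.mem_singleton_self j')).1
      have hcpj : cp = (if j % 2 = 0 then 1 else 0) := by
        rw [hcp_def, hj]
        by_cases he : j % 2 = 0
        · rw [if_pos he, Multiset.filter_singleton, if_pos (by simpa using he)]; rfl
        · rw [if_neg he, Multiset.filter_singleton, if_neg (by simpa using he)]; rfl
      have hcqj : cq = (if j' % 2 = 0 then 1 else 0) := by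
        rw [hcq_def, hj']
        by_cases he : j' % 2 = 0
        · rw [if_pos he, Multiset.filter_singleton, if_pos (by simpa using he)]; rfl
        · rw [if_neg he, Multiset.filter_singleton, if_neg (by simpa using he)]; rfl
      have hjj : j = j' := by
        by_cases he : j % 2 = 0 <;> by_cases he' : j' % 2 = 0
        · have e1 : gOdd j = j - 1 := if_pos he
          have e2 : gOdd j' = j' - 1 := if_pos he'
          omega
        · rw [hcpj, hcqj, if_pos he, if_neg he'] at hceq; omega
        · rw [hcpj, hcqj, if_neg he, if_pos he'] at hceq; omega
        · have e1 : gOdd j = j := if_neg he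
          have e2 : gOdd j' = j' := if_neg he'
          omega
      rw [hjj]
  exact Prod.ext hfst hsnd

lemma setA_finite (L n : ℕ) : Finite (setA L n) := by
  let T := ((k : Fin (n+1)) × Nat.Partition k.1) × ((k : Fin (n+1)) × Nat.Partition k.1)
  let g : setA L n → T := fun p =>
    (⟨⟨p.1.1.sum, by have := p.2.1; omega⟩,
        ⟨p.1.1, fun {i} hi => (p.2.2.1 i hi).1.pos, rfl⟩⟩,
     ⟨⟨p.1.2.sum, by have := p.2.1; omega⟩,
        ⟨p.1.2, fun {i} hi => (p.2.2.2.2 i hi).1.pos, rfl⟩⟩)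
  have hg : Function.Injective g := by
    intro a b h
    exact Subtype.ext (Prod.ext (congrArg (fun x : T => x.1.2.parts) h)
      (congrArg (fun x : T => x.2.2.parts) h))
  exact Finite.of_injective g hg


theorem exists_injection_setB_setA (L : ℕ) (hL : 0 < L) (n : ℕ) :
    (∃ f : setB L n → setA L n, Function.Injective f) ∧
      Nat.card (setB L n) ≤ Nat.card (setA L n) := by
  have hfin : Finite (setA L n) := setA_finite L n
  let f : setB L n → setA L n := fun p => ⟨Fmap p.1, Fmap_mem hL p.2⟩
  have hf : Function.Injective f := by
    intro a b hab
    exact Subtype.ext (Fmap_injOn _ a.2 _ b.2 (congrArg Subtype.val hab))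
  exact ⟨⟨f, hf⟩, Nat.card_le_card_of_injective f hf⟩
end
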